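/- Let M be a commutative cancellative monoid whose associated reduced monoid M/M^× is finitely generated. Then M satisfies the ascending chain condition on divisorial ideals (M is a Mori monoid). -/

import Mathlib

/-- `(M : X) = {x ∈ q(M) : xX ⊆ M}`, computed inside the quotient group `G`. -/
def colonSet {G : Type*} [CommGroup G] (M : Submonoid G) (X : Set G) : Set G :=
  {x : G | ∀ y ∈ X, x * y ∈ M}

/-- The divisorial closure `X_v = (M : (M : X))`. -/
def vCl {G : Type*} [CommGroup G] (M : Submonoid G) (X : Set G) : Set G :=
  colonSet M (colonSet M X)

/-- `I` is a divisorial ideal of `M`: a subset of `M` with `I_v = I`. -/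
def IsDivisorial {G : Type*} [CommGroup G] (M : Submonoid G) (I : Set G) : Prop :=
  I ⊆ (M : Set G) ∧ vCl M I = I

/-- `M` satisfies the ascending chain condition on divisorial ideals (`M` is Mori). -/
def MoriACC {G : Type*} [CommGroup G] (M : Submonoid G) : Prop :=
  ∀ f : ℕ → Set G, (∀ n, IsDivisorial M (f n)) → (∀ n, f n ⊆ f (n + 1)) →
    ∃ N, ∀ n, N ≤ n → f n = f N

/-- `a` is an atom of `M`: a non-unit of `M` such that in any factorization `a = b * c`
with `b, c ∈ M`, one of `b, c` is a unit of `M`. -/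
def IsAtomOf {G : Type*} [CommGroup G] (M : Submonoid G) (a : G) : Prop :=
  a ∈ M ∧ a⁻¹ ∉ M ∧ ∀ b c : G, b ∈ M → c ∈ M → a = b * c → b⁻¹ ∈ M ∨ c⁻¹ ∈ M

/-- A divisorial ideal is an `s`-ideal: it absorbs multiplication by elements of `M`. -/
theorem IsDivisorial.mul_mem {G : Type*} [CommGroup G] {M : Submonoid G} {I : Set G}
    (hI : IsDivisorial M I) {m a : G} (hm : m ∈ M) (ha : a ∈ I) : m * a ∈ I := by
  rw [← hI.2]
  intro y hy
  have h1 : y * a ∈ M := hy a ha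
  have h2 : m * (y * a) ∈ M := M.mul_mem hm h1
  have : m * a * y = m * (y * a) := by rw [mul_assoc, mul_comm a y]
  rwa [this]

/-- If the reduced monoid `M/M^×` of a cancellative commutative monoid `M` (realized as a
submonoid of its quotient group `G`) is finitely generated, then `M` satisfies the ACC on
divisorial ideals, i.e. `M` is a Mori monoid. -/
theorem mori_of_finitely_generated_red {G : Type*} [CommGroup G] (M : Submonoid G)
    (hq : ∀ g : G, ∃ a ∈ M, ∃ b ∈ M, g = a * b⁻¹)
    (S : Finset G) (hS : ↑S ⊆ (M : Set G))
    (hgen : ∀ a ∈ M, ∃ (l : List G) (u : G), (∀ x ∈ l, x ∈ S) ∧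
      u ∈ M ∧ u⁻¹ ∈ M ∧ a = u * l.prod) :
    MoriACC M := by
  classical
  intro f hdiv hmono
  by_contra hcon
  push_neg at hcon
  have hsub : Monotone f := monotone_nat_of_le_succ hmono
  -- from failure of stabilization, extract strict jumps
  have hjump : ∀ N : ℕ, ∃ n : ℕ, N < n ∧ ∃ a : G, a ∈ f n ∧ a ∉ f N := by
    intro N
    obtain ⟨n, hn, hne⟩ := hcon N
    have hss : f N ⊂ f n := Set.ssubset_iff_subset_ne.mpr ⟨hsub hn, hne.symm⟩
    obtain ⟨a, haI, haN⟩ := Set.exists_of_ssubset hss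
    refine ⟨n, hn.lt_of_ne ?_, a, haI, haN⟩
    rintro rfl
    exact hne rfl
  choose nxt hlt a ha hna using hjump
  -- the strictly increasing sequence of indices
  set k : ℕ → ℕ := fun i => nxt^[i] 0 with hk
  have hksucc : ∀ i, k (i + 1) = nxt (k i) := fun i => Function.iterate_succ_apply' nxt i 0
  have hkmono : StrictMono k := by
    apply strictMono_nat_of_lt_succ
    intro i
    rw [hksucc]
    exact hlt (k i)
  -- the sequence of witnesses
  have haM : ∀ i, a (k i) ∈ M := fun i => (hdiv (nxt (k i))).1 (ha (k i))
  choose l u hlS huM huinvM hfac using fun i => hgen (a (k i)) (haM i)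
  -- exponent vectors
  set v : ℕ → (↥S → ℕ) := fun i s => (l i).count (s : G) with hv
  set π : (↥S → ℕ) → G := fun w => ∏ s : ↥S, (s : G) ^ w s with hπ
  have hπM : ∀ w, π w ∈ M := fun w => Submonoid.prod_mem M fun s _ => M.pow_mem (hS s.2) _
  have hπl : ∀ i, π (v i) = (l i).prod := by
    intro i
    have hsub' : (l i).toFinset ⊆ S := by
      intro x hx
      exact hlS i x (List.mem_toFinset.mp hx)
    rw [Finset.prod_list_count_of_subset (l i) S hsub']
    simp only [hπ, hv]
    exact Finset.prod_attach S (fun x => x ^ List.count x (l i))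
  have hπdvd : ∀ w w' : ↥S → ℕ, w ≤ w' → π w' = π (w' - w) * π w := by
    intro w w' hle
    simp only [hπ, ← Finset.prod_mul_distrib, ← pow_add]
    apply Finset.prod_congr rfl
    intro s _
    congr 1
    simp only [Pi.sub_apply]
    have hws : w s ≤ w' s := Pi.le_def.mp hle s
    omega
  -- π (v i) lies in f (k (i+1)) but not in f (k i)
  have hbmem : ∀ i, π (v i) ∈ f (k (i + 1)) := by
    intro i
    have : π (v i) = (u i)⁻¹ * a (k i) := by
      rw [hπl i, hfac i]
      group
    rw [this, hksucc]
    exact (hdiv _).mul_mem (huinvM i) (ha (k i))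
  have hbnot : ∀ i, π (v i) ∉ f (k i) := by
    intro i hmem
    apply hna (k i)
    have : a (k i) = u i * π (v i) := by rw [hπl i]; exact hfac i
    rw [this]
    exact (hdiv _).mul_mem (huM i) hmem
  -- Dickson's lemma
  have hpwo : (Set.univ : Set (↥S → ℕ)).IsPWO :=
    Set.isPWO_univ_iff.mpr inferInstance
  obtain ⟨i, j, hij, hle⟩ := hpwo.exists_lt (f := v) (fun _ => Set.mem_univ _)
  apply hbnot j
  have h1 : π (v i) ∈ f (k j) := hsub (hkmono.monotone (Nat.succ_le_of_lt hij)) (hbmem i)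
  rw [hπdvd (v i) (v j) hle]
  exact (hdiv _).mul_mem (hπM _) h1
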